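/- Let 𝔛 be a vector space with a sequence (f̄_n) of linear functionals separating points, endowed with the coarsest topology τ making all f̄_n continuous, and let K ⊆ 𝔛 be compact and convex. Then there exist continuous point-separating functions f_n : 𝔛 → [0, 1/n], n ∈ ℕ, such that, setting F = (f_n)_{n=1}^∞ : 𝔛 → ℓ²(ℕ), the image F(K) is a convex subset of the Hilbert cube 𝒬 ⊆ ℓ²(ℕ). -/

import Mathlib

open Real

noncomputable def chiFn (u : ℝ) : ℝ :=
  max (-(1/2)) (min u (1/2)) + (1/π) * arctan (max 0 (u - 1/2))
    - (1/π) * arctan (max 0 (-u - 1/2))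

lemma chiFn_continuous : Continuous chiFn := by
  unfold chiFn
  exact ((continuous_const.max (continuous_id.min continuous_const)).add
    (continuous_const.mul (Real.continuous_arctan.comp
      (continuous_const.max (continuous_id.sub continuous_const))))).sub
    (continuous_const.mul (Real.continuous_arctan.comp
      (continuous_const.max (continuous_id.neg.sub continuous_const))))

lemma arctan_nonneg' {u : ℝ} (h : 0 ≤ u) : 0 ≤ arctan u := by
  simpa [Real.arctan_zero] using Real.arctan_strictMono.monotone h

lemma chiFn_eq_id {u : ℝ} (h : |u| ≤ 1/2) : chiFn u = u := by
  rw [abs_le] at h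
  unfold chiFn
  rw [min_eq_left h.2, max_eq_right h.1,
    max_eq_left (by linarith), max_eq_left (by linarith)]
  simp [Real.arctan_zero]

lemma chiFn_mem (u : ℝ) : chiFn u ∈ Set.Icc (-1 : ℝ) 1 := by
  have hpi : (0:ℝ) < π := Real.pi_pos
  have h1 : (0:ℝ) ≤ arctan (max 0 (u - 1/2)) := arctan_nonneg' (le_max_left _ _)
  have h2 : arctan (max 0 (u - 1/2)) ≤ π/2 := (Real.arctan_lt_pi_div_two _).le
  have h3 : (0:ℝ) ≤ arctan (max 0 (-u - 1/2)) := arctan_nonneg' (le_max_left _ _)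
  have h4 : arctan (max 0 (-u - 1/2)) ≤ π/2 := (Real.arctan_lt_pi_div_two _).le
  have hc1 : -(1/2 : ℝ) ≤ max (-(1/2)) (min u (1/2)) := le_max_left _ _
  have hc2 : max (-(1/2 : ℝ)) (min u (1/2)) ≤ 1/2 :=
    max_le (by norm_num) (min_le_right _ _)
  have e1 : (1/π) * arctan (max 0 (u - 1/2)) ≤ 1/2 := by
    rw [div_mul_eq_mul_div, one_mul, div_le_iff₀ hpi]; linarith
  have e2 : (0:ℝ) ≤ (1/π) * arctan (max 0 (u - 1/2)) := by positivity
  have e3 : (1/π) * arctan (max 0 (-u - 1/2)) ≤ 1/2 := by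
    rw [div_mul_eq_mul_div, one_mul, div_le_iff₀ hpi]; linarith
  have e4 : (0:ℝ) ≤ (1/π) * arctan (max 0 (-u - 1/2)) := by positivity
  constructor <;> unfold chiFn <;> linarith

lemma chiFn_strictMono : StrictMono chiFn := by
  have hpi : (0:ℝ) < π := Real.pi_pos
  intro s u hsu
  have mA : max (-(1/2:ℝ)) (min s (1/2)) ≤ max (-(1/2)) (min u (1/2)) :=
    max_le_max le_rfl (min_le_min hsu.le le_rfl)
  have mB : arctan (max 0 (s - 1/2)) ≤ arctan (max 0 (u - 1/2)) :=
    Real.arctan_strictMono.monotone (max_le_max le_rfl (by linarith))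
  have mC : arctan (max 0 (-u - 1/2)) ≤ arctan (max 0 (-s - 1/2)) :=
    Real.arctan_strictMono.monotone (max_le_max le_rfl (by linarith))
  have hp : (0:ℝ) < 1/π := by positivity
  unfold chiFn
  rcases le_or_gt (1/2 : ℝ) s with hs | hs
  · -- B strict
    have hB : arctan (max 0 (s - 1/2)) < arctan (max 0 (u - 1/2)) := by
      apply Real.arctan_strictMono
      rw [max_eq_right (by linarith : (0:ℝ) ≤ s - 1/2),
        max_eq_right (by linarith : (0:ℝ) ≤ u - 1/2)]
      linarith
    nlinarith [mul_lt_mul_of_pos_left hB hp, mul_le_mul_of_nonneg_left mC hp.le]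
  rcases le_or_gt u (-(1/2 : ℝ)) with hu | hu
  · -- C strict
    have hC : arctan (max 0 (-u - 1/2)) < arctan (max 0 (-s - 1/2)) := by
      apply Real.arctan_strictMono
      rw [max_eq_right (by linarith : (0:ℝ) ≤ -u - 1/2),
        max_eq_right (by linarith : (0:ℝ) ≤ -s - 1/2)]
      linarith
    nlinarith [mul_lt_mul_of_pos_left hC hp, mul_le_mul_of_nonneg_left mB hp.le]
  · -- A strict: s < 1/2, -1/2 < u
    have hA : max (-(1/2:ℝ)) (min s (1/2)) < max (-(1/2)) (min u (1/2)) := by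
      rw [min_eq_left hs.le, max_eq_right (le_min hu.le (by norm_num))]
      exact max_lt (lt_min hu (by norm_num)) (lt_min hsu hs)
    nlinarith [mul_le_mul_of_nonneg_left mB hp.le, mul_le_mul_of_nonneg_left mC hp.le]
theorem convex_image_in_Hilbert_cube {X : Type*} [AddCommGroup X] [Module ℝ X]
    [t : TopologicalSpace X]
    (g : ℕ → X →ₗ[ℝ] ℝ)
    (hgsep : ∀ x y : X, x ≠ y → ∃ n, g n x ≠ g n y)
    (ht : t = ⨅ n, TopologicalSpace.induced (g n) inferInstance)
    (K : Set X) (hK : IsCompact K) (hKconv : Convex ℝ K) :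
    ∃ f : ℕ → X → ℝ,
      (∀ n, Continuous (f n)) ∧
      (∀ (n : ℕ) (x : X), f n x ∈ Set.Icc (0 : ℝ) (1 / (↑n + 1))) ∧
      (∀ x y : X, x ≠ y → ∃ n, f n x ≠ f n y) ∧
      ∀ F : X → lp (fun _ : ℕ => ℝ) 2, (∀ x n, F x n = f n x) →
        (F '' K ⊆ {a : lp (fun _ : ℕ => ℝ) 2 | ∀ i : ℕ, a i ∈ Set.Icc (0 : ℝ) (1 / (↑i + 1))}) ∧
        Convex ℝ (F '' K) := by
  -- each g n is continuous
  have hgc : ∀ n, Continuous (g n) := by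
    intro n
    rw [continuous_iff_le_induced, ht]
    exact iInf_le _ n
  -- bounds on K
  have hbd : ∀ n, ∃ M : ℝ, 0 < M ∧ ∀ x ∈ K, |g n x| ≤ M := by
    intro n
    obtain ⟨C, hC⟩ := hK.exists_bound_of_continuousOn (hgc n).continuousOn
    exact ⟨max C 1, lt_of_lt_of_le one_pos (le_max_right _ _),
      fun x hx => (hC x hx).trans (le_max_left _ _)⟩
  choose M hMpos hM using hbd
  set f : ℕ → X → ℝ := fun n x => (chiFn (g n x / (2 * M n)) + 1) / (2 * (n + 1)) with hf
  have hden : ∀ n : ℕ, (0:ℝ) < 2 * (n + 1) := by intro n; positivity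
  -- identity formula on K
  have hid : ∀ n : ℕ, ∀ x ∈ K, f n x = (g n x / (2 * M n) + 1) / (2 * (n + 1)) := by
    intro n x hx
    have hMn : (0:ℝ) < 2 * M n := mul_pos two_pos (hMpos n)
    have : |g n x / (2 * M n)| ≤ 1/2 := by
      rw [abs_div, abs_of_pos hMn, div_le_iff₀ hMn]
      have := hM n x hx
      linarith
    rw [hf]; simp only []; rw [chiFn_eq_id this]
  refine ⟨f, ?_, ?_, ?_, ?_⟩
  · intro n
    exact (chiFn_continuous.comp ((hgc n).div_const _)).add continuous_const |>.div_const _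
  · intro n x
    have h := chiFn_mem (g n x / (2 * M n))
    obtain ⟨h1, h2⟩ := h
    constructor
    · apply div_nonneg (by linarith) (hden n).le
    · rw [div_le_div_iff₀ (hden n) (by positivity : (0:ℝ) < (n:ℝ) + 1)]
      nlinarith [hden n]
  · intro x y hxy
    obtain ⟨n, hn⟩ := hgsep x y hxy
    refine ⟨n, fun h => hn ?_⟩
    have hMn : (0:ℝ) < 2 * M n := mul_pos two_pos (hMpos n)
    have h' : (chiFn (g n x / (2 * M n)) + 1) / (2 * ((n:ℝ) + 1))
        = (chiFn (g n y / (2 * M n)) + 1) / (2 * ((n:ℝ) + 1)) := h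
    have h1 : chiFn (g n x / (2 * M n)) = chiFn (g n y / (2 * M n)) := by
      have hd := hden n
      field_simp at h'
      linarith
    have h2 := chiFn_strictMono.injective h1
    field_simp [hMn.ne'] at h2
    exact (div_left_inj' (hMpos n).ne').mp h2
  · intro F hF
    constructor
    · rintro a ⟨x, hx, rfl⟩ i
      rw [hF]
      constructor
      · have := (chiFn_mem (g i x / (2 * M i))).1
        apply div_nonneg (by linarith) (hden i).le
      · have := (chiFn_mem (g i x / (2 * M i))).2
        rw [div_le_div_iff₀ (hden i) (by positivity : (0:ℝ) < (i:ℝ) + 1)]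
        nlinarith [hden i]
    · rintro a ⟨x, hx, rfl⟩ b ⟨y, hy, rfl⟩ p q hp hq hpq
      have hc : p • x + q • y ∈ K := hKconv hx hy hp hq hpq
      refine ⟨p • x + q • y, hc, ?_⟩
      apply lp.ext
      funext i
      have hcoord : (p • F x + q • F y : lp (fun _ : ℕ => ℝ) 2) i
          = p * (F x i) + q * (F y i) := by
        simp [lp.coeFn_add, lp.coeFn_smul]; rfl
      rw [hF, hcoord, hF, hF, hid i x hx, hid i y hy, hid i _ hc]
      have : g i (p • x + q • y) = p * g i x + q * g i y := by
        simp [map_add, map_smul]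
      rw [this]
      field_simp
      ring_nf
      nlinarith [hpq]
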